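/- Let G(x,y) be defined for 0 ≤ y ≤ x ≤ 1 (one smooth piece) by the closed form G(x,y) = Q[e^{-b(x-y)}sin(2a - a(x-y) - φ) - e^{-4b + b(x-y)}sin(2a - a(x-y) + φ) - e^{-2b + b(x+y)}sin(a(x+y) - φ) + e^{-2b - b(x+y)}sin(a(x+y) + φ)]. Then G(1, y) = 0 for all y ∈ [0,1]. -/
import Mathlib

open Real

theorem stmt_17 (a b φ θ Q : ℝ) (ha : 0 < a) (hb : 0 < b) (hQ : Q ≠ 0)
    (hθ : θ = Real.arctan (b / a))
    (hφ : φ = 2 * a - θ - π / 2 + Real.arctan (Real.sin (4 * a) / (Real.exp (4 * b) - Real.cos (4 * a))))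
    (G : ℝ → ℝ → ℝ)
    (hG : G = fun x y => Q * (Real.exp (-b * (x - y)) * Real.sin (2 * a - a * (x - y) - φ)
      - Real.exp (-4 * b + b * (x - y)) * Real.sin (2 * a - a * (x - y) + φ)
      - Real.exp (-2 * b + b * (x + y)) * Real.sin (a * (x + y) - φ)
      + Real.exp (-2 * b - b * (x + y)) * Real.sin (a * (x + y) + φ))) :
    ∀ y ∈ Set.Icc (0 : ℝ) 1, G 1 y = 0 := by
  intro y hy
  subst hG
  simp only
  have h1 : -b * (1 - y) = -2 * b + b * (1 + y) := by ring
  have h2 : (2 : ℝ) * a - a * (1 - y) = a * (1 + y) := by ring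
  have h3 : -4 * b + b * (1 - y) = -2 * b - b * (1 + y) := by ring
  rw [h1, h2, h3]
  ring
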